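/- Fix T ≥ 1 and constants 0 < μ_g ≤ L_{g,1}, L_{f,0}, L_{f,1}, L_{g,2}, L_F, Q > 0; set κ_g := L_{g,1}/μ_g and κ_F := 2L_{f,1}²/μ_g² + 4L_{f,0}²L_{g,2}²/μ_g⁴ + 16L_{f,1}²L_{g,1}²/μ_g⁴ + 16L_{f,0}²L_{g,1}²L_{g,2}²/μ_g⁶. Under the standing bilevel assumptions, suppose the adaptive inner-loop algorithm parameters satisfy: δ > 0, 0 < β ≤ 1/L_{g,1}, M ∈ ℕ with (1 − βμ_g)^M ≤ 1/T, and 0 < γ ≤ 1/(2L_F). Suppose the iterates x_t ∈ 𝒳 (t = 1,…,T+1), y_t ∈ E₂, v_t ∈ V satisfy, for every t ∈ {1,…,T}: (i) ‖∇_y g_t(x_t, y_{t+1})‖ ≤ δ; (ii) v_{t+1} = v_t^{M+1}, where v_t^1 = v_t (with v_1 ∈ V) and v_t^{m+1} = P_V(v_t^m − β(H_t(x_t, y_{t+1}) v_t^m − ∇_y f_t(x_t, y_{t+1}))) for m = 1,…,M; (iii) x_{t+1} = P_𝒳(x_t − γ ∇̃f_t(x_t, y_{t+1}, v_{t+1})).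 Then the bilevel local regret satisfies Σ_{t=1}^T ‖𝒢_𝒳(x_t, ∇F_t(x_t), γ)‖² ≤ 16Q/γ + 6 κ_F δ² T + 768 L_{f,0}² κ_g² + (8/γ) Σ_{t=2}^T sup_{x∈E₁} |F_t(x) − F_{t−1}(x)|. -/

import Mathlib

open scoped RealInnerProductSpace
set_option maxHeartbeats 4000000


private lemma aobo_sq_le (a b : ℝ) (ha : 0 ≤ a) (hb : 0 ≤ b) (h : a ^ 2 ≤ b ^ 2) : a ≤ b := by
  nlinarith

private lemma aobo_line_deriv {E : Type*} [NormedAddCommGroup E] [InnerProductSpace ℝ E] [CompleteSpace E]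
    (f : E → ℝ) (f' : E) (x d : E) (τ : ℝ) (hf : HasGradientAt f f' (x + τ • d)) :
    HasDerivAt (fun s : ℝ => f (x + s • d)) ⟪f', d⟫ τ := by
  have h1 : HasDerivAt (fun s : ℝ => x + s • d) d τ := by
    simpa using ((hasDerivAt_id τ).smul_const d).const_add x
  have h2 := hf.hasFDerivAt.comp_hasDerivAt τ h1
  simp only [InnerProductSpace.toDual_apply_apply] at h2
  exact h2

private lemma aobo_descent {E : Type*} [NormedAddCommGroup E] [InnerProductSpace ℝ E] [CompleteSpace E]
    (f : E → ℝ) (f' : E → E) (L : ℝ) (hL : 0 ≤ L)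
    (hdiff : ∀ z, HasGradientAt f (f' z) z)
    (hlip : ∀ z w, ‖f' z - f' w‖ ≤ L * ‖z - w‖) (x y : E) :
    f y ≤ f x + ⟪f' x, y - x⟫ + L / 2 * ‖y - x‖ ^ 2 := by
  set d := y - x with hd
  set φ : ℝ → ℝ := fun s => f (x + s • d) - s * ⟪f' x, d⟫ - L * s ^ 2 / 2 * ‖d‖ ^ 2 with hφ
  have hder : ∀ s : ℝ, HasDerivAt φ
      (⟪f' (x + s • d), d⟫ - ⟪f' x, d⟫ - L * s * ‖d‖ ^ 2) s := by
    intro s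
    have h1 : HasDerivAt (fun s : ℝ => f (x + s • d)) ⟪f' (x + s • d), d⟫ s :=
      aobo_line_deriv f _ x d s (hdiff _)
    have h2 : HasDerivAt (fun s : ℝ => s * ⟪f' x, d⟫) ⟪f' x, d⟫ s := by
      simpa using (hasDerivAt_id s).mul_const ⟪f' x, d⟫
    have h3 : HasDerivAt (fun s : ℝ => L * s ^ 2 / 2 * ‖d‖ ^ 2)
        (L * s * ‖d‖ ^ 2) s := by
      have h := (hasDerivAt_pow 2 s).const_mul (L / 2 * ‖d‖ ^ 2)
      have heq : (fun s : ℝ => L / 2 * ‖d‖ ^ 2 * s ^ 2)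
          = fun s : ℝ => L * s ^ 2 / 2 * ‖d‖ ^ 2 := by funext s; ring
      rw [heq] at h
      convert h using 1
      · rfl
      · rfl
      push_cast; ring
    exact (h1.sub h2).sub h3
  have hanti : AntitoneOn φ (Set.Icc 0 1) := by
    apply antitoneOn_of_deriv_nonpos (convex_Icc 0 1)
    · exact fun s _ => (hder s).continuousAt.continuousWithinAt
    · intro s hs
      exact ((hder s).differentiableAt).differentiableWithinAt
    · intro s hs
      rw [interior_Icc] at hs
      rw [(hder s).deriv]
      have h4 : ⟪f' (x + s • d), d⟫ - ⟪f' x, d⟫ = ⟪f' (x + s • d) - f' x, d⟫ := by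
        rw [inner_sub_left]
      have h5 : ⟪f' (x + s • d) - f' x, d⟫ ≤ ‖f' (x + s • d) - f' x‖ * ‖d‖ :=
        real_inner_le_norm _ _
      have h6 : ‖f' (x + s • d) - f' x‖ ≤ L * (s * ‖d‖) := by
        have := hlip (x + s • d) x
        simpa [norm_smul, abs_of_pos hs.1] using this
      nlinarith [norm_nonneg d, norm_nonneg (f' (x + s • d) - f' x), hs.1.le]
  have h01 := hanti (Set.left_mem_Icc.mpr zero_le_one) (Set.right_mem_Icc.mpr zero_le_one)
    zero_le_one
  simp only [hφ, zero_smul, one_smul, add_zero, zero_mul, zero_pow, mul_zero, sub_zero,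
    one_pow, mul_one, zero_div] at h01
  have hxy : x + d = y := by rw [hd]; abel
  rw [hxy] at h01
  linarith [h01]


private lemma aobo_strong_lb {E : Type*} [NormedAddCommGroup E] [InnerProductSpace ℝ E]
    [CompleteSpace E] (g : E → ℝ) (μ : ℝ) (hsc : StrongConvexOn Set.univ μ g)
    (x z : E) (gx : E) (hg : HasGradientAt g gx x) :
    g x + ⟪gx, z - x⟫ + μ / 2 * ‖z - x‖ ^ 2 ≤ g z := by
  set d := z - x with hd
  set ψ : ℝ → ℝ := fun s => g (x + s • d) with hψ
  have hder : HasDerivAt ψ ⟪gx, d⟫ 0 := by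
    have hg0 : HasGradientAt g gx (x + (0 : ℝ) • d) := by simpa using hg
    have h1 : HasDerivAt (fun s : ℝ => x + s • d) d 0 := by
      simpa using ((hasDerivAt_id (0:ℝ)).smul_const d).const_add x
    have h2 := hg0.hasFDerivAt.comp_hasDerivAt 0 h1
    simp only [InnerProductSpace.toDual_apply_apply] at h2
    exact h2
  have hslope : Filter.Tendsto (slope ψ 0) (nhdsWithin 0 (Set.Ioi (0:ℝ))) (nhds ⟪gx, d⟫) :=
    (hasDerivAt_iff_tendsto_slope.mp hder).mono_left
      (nhdsWithin_mono 0 (fun s hs => ne_of_gt hs))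
  have hrhs : Filter.Tendsto (fun s : ℝ => g z - g x - (1 - s) * (μ / 2 * ‖z - x‖ ^ 2))
      (nhdsWithin 0 (Set.Ioi (0:ℝ))) (nhds (g z - g x - μ / 2 * ‖z - x‖ ^ 2)) := by
    have : Filter.Tendsto (fun s : ℝ => g z - g x - (1 - s) * (μ / 2 * ‖z - x‖ ^ 2))
        (nhds 0) (nhds (g z - g x - (1 - 0) * (μ / 2 * ‖z - x‖ ^ 2))) := by
      apply Filter.Tendsto.sub tendsto_const_nhds
      exact (Filter.Tendsto.sub tendsto_const_nhds Filter.tendsto_id).mul tendsto_const_nhds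
    simpa using this.mono_left nhdsWithin_le_nhds
  have hle : ∀ᶠ s in nhdsWithin 0 (Set.Ioi (0:ℝ)),
      slope ψ 0 s ≤ g z - g x - (1 - s) * (μ / 2 * ‖z - x‖ ^ 2) := by
    filter_upwards [self_mem_nhdsWithin,
      eventually_nhdsWithin_of_eventually_nhds (eventually_lt_nhds zero_lt_one)] with s hs hs1
    have hs0 : (0:ℝ) < s := hs
    have hcomb := hsc.2 (Set.mem_univ z) (Set.mem_univ x) hs0.le (by linarith : (0:ℝ) ≤ 1 - s)
      (by ring)
    have hpt : s • z + (1 - s) • x = x + s • d := by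
      rw [hd]; module
    rw [hpt] at hcomb
    have hψs : ψ s ≤ s * g z + (1 - s) * g x - s * (1 - s) * (μ / 2 * ‖z - x‖ ^ 2) := by
      simpa [hψ, smul_eq_mul] using hcomb
    rw [slope_def_field]
    have : (ψ s - ψ 0) / (s - 0) ≤ g z - g x - (1 - s) * (μ / 2 * ‖z - x‖ ^ 2) := by
      rw [div_le_iff₀ (by simpa using hs0)]
      have hψ0 : ψ 0 = g x := by simp [hψ]
      rw [hψ0]
      nlinarith [hψs]
    simpa [slope_def_field, div_eq_inv_mul] using this
  have := le_of_tendsto_of_tendsto hslope hrhs hle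
  have hdd : ‖d‖ = ‖z - x‖ := by rw [hd]
  linarith [this]


private lemma aobo_proj_vi {E : Type*} [NormedAddCommGroup E] [InnerProductSpace ℝ E]
    (K : Set E) (hK : Convex ℝ K) (p : E → E)
    (hp : ∀ w : E, p w ∈ K ∧ ∀ u ∈ K, ‖w - p w‖ ≤ ‖w - u‖)
    (z : E) : ∀ u ∈ K, ⟪z - p z, u - p z⟫ ≤ 0 := by
  haveI : Nonempty K := ⟨⟨p z, (hp z).1⟩⟩
  apply (norm_eq_iInf_iff_real_inner_le_zero hK (hp z).1).mp
  apply le_antisymm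
  · exact le_ciInf fun w => (hp z).2 w w.2
  · refine ciInf_le (f := fun w : K => ‖z - (w : E)‖) ⟨0, ?_⟩ ⟨p z, (hp z).1⟩
    rintro r ⟨w, rfl⟩
    exact norm_nonneg _

private lemma aobo_proj_nonexp {E : Type*} [NormedAddCommGroup E] [InnerProductSpace ℝ E]
    (K : Set E) (hK : Convex ℝ K) (p : E → E)
    (hp : ∀ w : E, p w ∈ K ∧ ∀ u ∈ K, ‖w - p w‖ ≤ ‖w - u‖)
    (z z' : E) : ‖p z - p z'‖ ≤ ‖z - z'‖ := by
  have h1 := aobo_proj_vi K hK p hp z (p z') (hp z').1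
  have h2 := aobo_proj_vi K hK p hp z' (p z) (hp z).1
  set q := p z - p z' with hq
  have key : ‖q‖ ^ 2 ≤ ⟪z - z', q⟫ := by
    have e1 : ⟪z - p z, p z' - p z⟫ = -⟪z - p z, q⟫ := by
      rw [hq, ← inner_neg_right, neg_sub]
    have e2 : ⟪z' - p z', p z - p z'⟫ = ⟪z' - p z', q⟫ := rfl
    have e3 : ⟪z - z', q⟫ = ⟪z - p z, q⟫ - ⟪z' - p z', q⟫ + ⟪q, q⟫ := by
      rw [← inner_sub_left, ← inner_add_left]
      congr 1
      rw [hq]; abel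
    rw [e3, ← real_inner_self_eq_norm_sq]
    rw [e1] at h1
    rw [e2] at h2
    linarith
  rcases eq_or_lt_of_le (norm_nonneg q) with h0 | h0
  · rw [← h0]; exact norm_nonneg _
  · have := real_inner_le_norm (z - z') q
    nlinarith

private lemma aobo_sa_norm {E : Type*} [NormedAddCommGroup E] [InnerProductSpace ℝ E]
    (S : E →L[ℝ] E) (c : ℝ) (hc : 0 ≤ c)
    (hsa : ∀ v u : E, ⟪S v, u⟫ = ⟪v, S u⟫)
    (hlo : ∀ w : E, 0 ≤ ⟪S w, w⟫) (hhi : ∀ w : E, ⟪S w, w⟫ ≤ c * ‖w‖ ^ 2)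
    (u : E) : ‖S u‖ ≤ c * ‖u‖ := by
  by_cases hSu : S u = 0
  · rw [hSu, norm_zero]; positivity
  have hSu' : 0 < ‖S u‖ := norm_pos_iff.mpr hSu
  have hu : u ≠ 0 := by rintro rfl; simp at hSu
  have hu' : 0 < ‖u‖ := norm_pos_iff.mpr hu
  set v := (‖u‖ / ‖S u‖) • S u with hv
  have hnv : ‖v‖ = ‖u‖ := by
    rw [hv, norm_smul, Real.norm_eq_abs, abs_of_pos (by positivity), div_mul_cancel₀ _ (ne_of_gt hSu')]
  have hinn : ⟪S u, v⟫ = ‖u‖ * ‖S u‖ := by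
    rw [hv, real_inner_smul_right, real_inner_self_eq_norm_sq]
    field_simp
  have hpolar : ⟪S (u + v), u + v⟫ - ⟪S (u - v), u - v⟫ = 4 * ⟪S u, v⟫ := by
    have hc1 : ⟪S v, u⟫ = ⟪S u, v⟫ := by rw [hsa v u, real_inner_comm]
    rw [map_add, map_sub, inner_add_left, inner_sub_left, inner_add_right, inner_add_right,
      inner_sub_right, inner_sub_right, hc1]
    ring
  have hpar : ‖u + v‖ ^ 2 ≤ 4 * ‖u‖ ^ 2 := by
    have := real_inner_le_norm u v
    have := norm_add_sq_real u v
    nlinarith [hnv]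
  have h4 : 4 * ⟪S u, v⟫ ≤ c * (4 * ‖u‖ ^ 2) := by
    have := hlo (u - v)
    have := hhi (u + v)
    nlinarith
  rw [hinn] at h4
  nlinarith

private lemma aobo_iter_contract {E : Type*} [NormedAddCommGroup E]
    (Φ : E → E) (v' : E) (ρ : ℝ) (hρ : 0 ≤ ρ)
    (hcon : ∀ u : E, ‖Φ u - v'‖ ≤ ρ * ‖u - v'‖) :
    ∀ (m : ℕ) (u : E), ‖Φ^[m] u - v'‖ ≤ ρ ^ m * ‖u - v'‖ := by
  intro m
  induction m with
  | zero => intro u; simp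
  | succ m ih =>
    intro u
    rw [Function.iterate_succ_apply']
    calc ‖Φ (Φ^[m] u) - v'‖ ≤ ρ * ‖Φ^[m] u - v'‖ := hcon _
      _ ≤ ρ * (ρ ^ m * ‖u - v'‖) := by
          exact mul_le_mul_of_nonneg_left (ih u) hρ
      _ = ρ ^ (m + 1) * ‖u - v'‖ := by ring

private lemma aobo_iter_mem {E : Type*} [NormedAddCommGroup E]
    (Φ : E → E) (K : Set E) (hΦ : ∀ u, Φ u ∈ K) :
    ∀ (m : ℕ) (u : E), u ∈ K → Φ^[m] u ∈ K := by
  intro m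
  induction m with
  | zero => intro u hu; simpa using hu
  | succ m ih =>
    intro u hu
    rw [Function.iterate_succ_apply']
    exact hΦ _

private lemma aobo_telescope {E : Type*} (F : ℕ → E → ℝ) (x : ℕ → E) :
    ∀ T : ℕ, 1 ≤ T →
    ∑ t ∈ Finset.Icc 1 T, (F t (x t) - F t (x (t + 1))) =
      F 1 (x 1) - F T (x (T + 1)) +
        ∑ t ∈ Finset.Icc 2 T, (F t (x t) - F (t - 1) (x t)) := by
  intro T
  induction T with
  | zero => intro h; omega
  | succ T ih =>
    intro _
    rcases Nat.lt_or_ge T 1 with hT | hT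
    · interval_cases T
      simp
    · rw [Finset.sum_Icc_succ_top (by omega : 1 ≤ T + 1),
        Finset.sum_Icc_succ_top (by omega : 2 ≤ T + 1), ih hT]
      simp only [Nat.add_sub_cancel]
      ring



private lemma aobo_div_bd (μ C a : ℝ) (hμ : 0 < μ) (hC : 0 ≤ C) (ha : 0 ≤ a)
    (h : μ * a ^ 2 ≤ C * a) : a ≤ C / μ := by
  rcases eq_or_lt_of_le ha with h0 | h0
  · rw [← h0]; positivity
  · rw [le_div_iff₀ hμ]; nlinarith


/-- Optimal standard bilevel local regret of the adaptive inner-loop online bilevel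
optimizer (AOBO, Theorem 3.1): under the standing bilevel assumptions, if at each round
the inner solution is computed to accuracy `‖∇_y g_t(x_t,y_{t+1})‖ ≤ δ`, the linear
system is solved by `M` projected gradient steps with `(1−βμ_g)^M ≤ 1/T`, and the outer
iterate is a projected step along the approximate hypergradient, then
`Σ_{t=1}^T ‖𝒢_𝒳(x_t, ∇F_t(x_t), γ)‖² ≤ 16Q/γ + 6κ_F δ²T + 768 L_{f,0}²κ_g²
  + (8/γ)·Σ_{t=2}^T sup_x |F_t(x) − F_{t−1}(x)|`.
Lipschitz conditions with respect to the ℓ² norm on `E₁ × E₂` are expressed by squared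
component inequalities. -/
theorem aobo_regret_bound {E₁ E₂ : Type*}
    [NormedAddCommGroup E₁] [InnerProductSpace ℝ E₁] [FiniteDimensional ℝ E₁]
    [NormedAddCommGroup E₂] [InnerProductSpace ℝ E₂] [FiniteDimensional ℝ E₂]
    -- constants
    (μ_g L_g1 L_f0 L_f1 L_g2 L_F Q : ℝ)
    (hμ : 0 < μ_g) (hμL : μ_g ≤ L_g1) (hLf0 : 0 < L_f0) (hLf1 : 0 < L_f1)
    (hLg2 : 0 < L_g2) (hLF : 0 < L_F) (hQ : 0 < Q)
    (κ_g κ_F : ℝ) (hκg : κ_g = L_g1 / μ_g)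
    (hκF : κ_F = 2 * L_f1 ^ 2 / μ_g ^ 2 + 4 * L_f0 ^ 2 * L_g2 ^ 2 / μ_g ^ 4 +
      16 * L_f1 ^ 2 * L_g1 ^ 2 / μ_g ^ 4 + 16 * L_f0 ^ 2 * L_g1 ^ 2 * L_g2 ^ 2 / μ_g ^ 6)
    (T : ℕ) (hT : 1 ≤ T)
    -- the feasible set and its metric projection
    (X : Set E₁) (hXne : X.Nonempty) (hXcl : IsClosed X) (hXconv : Convex ℝ X)
    (projX : E₁ → E₁)
    (hprojX : ∀ z : E₁, projX z ∈ X ∧ ∀ u ∈ X, ‖z - projX z‖ ≤ ‖z - u‖)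
    -- the metric projection onto the ball V = {‖v‖ ≤ L_f0/μ_g}
    (projV : E₂ → E₂)
    (hprojV : ∀ z : E₂, ‖projV z‖ ≤ L_f0 / μ_g ∧
      ∀ u : E₂, ‖u‖ ≤ L_f0 / μ_g → ‖z - projV z‖ ≤ ‖z - u‖)
    -- upper-level objectives and their partial gradients
    (f : ℕ → E₁ → E₂ → ℝ) (fx : ℕ → E₁ → E₂ → E₁) (fy : ℕ → E₁ → E₂ → E₂)
    (hfx : ∀ t ∈ Finset.Icc 1 T, ∀ (x : E₁) (y : E₂),
      HasGradientAt (fun x' => f t x' y) (fx t x y) x)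
    (hfy : ∀ t ∈ Finset.Icc 1 T, ∀ (x : E₁) (y : E₂),
      HasGradientAt (fun y' => f t x y') (fy t x y) y)
    (hfbd : ∀ t ∈ Finset.Icc 1 T, ∀ (x : E₁) (y : E₂),
      ‖fx t x y‖ ^ 2 + ‖fy t x y‖ ^ 2 ≤ L_f0 ^ 2)
    (hflip : ∀ t ∈ Finset.Icc 1 T, ∀ (x x' : E₁) (y y' : E₂),
      ‖fx t x y - fx t x' y'‖ ^ 2 + ‖fy t x y - fy t x' y'‖ ^ 2 ≤
        L_f1 ^ 2 * (‖x - x'‖ ^ 2 + ‖y - y'‖ ^ 2))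
    -- inner-level objectives: strongly convex with unique minimizer ystar
    (g : ℕ → E₁ → E₂ → ℝ) (gy : ℕ → E₁ → E₂ → E₂) (ystar : ℕ → E₁ → E₂)
    (hgy : ∀ t ∈ Finset.Icc 1 T, ∀ (x : E₁) (y : E₂), HasGradientAt (g t x) (gy t x y) y)
    (hgsc : ∀ t ∈ Finset.Icc 1 T, ∀ x : E₁, StrongConvexOn Set.univ μ_g (g t x))
    (hymin : ∀ t ∈ Finset.Icc 1 T, ∀ (x : E₁) (y : E₂), g t x (ystar t x) ≤ g t x y)
    (hyuniq : ∀ t ∈ Finset.Icc 1 T, ∀ (x : E₁) (y : E₂),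
      (∀ y' : E₂, g t x y ≤ g t x y') → y = ystar t x)
    (hgylip : ∀ t ∈ Finset.Icc 1 T, ∀ (x x' : E₁) (y y' : E₂),
      ‖gy t x y - gy t x' y'‖ ^ 2 ≤ L_g1 ^ 2 * (‖x - x'‖ ^ 2 + ‖y - y'‖ ^ 2))
    -- Hessian data
    (H : ℕ → E₁ → E₂ → (E₂ →L[ℝ] E₂)) (J : ℕ → E₁ → E₂ → (E₂ →L[ℝ] E₁))
    (hHsa : ∀ t ∈ Finset.Icc 1 T, ∀ (x : E₁) (y : E₂) (v u : E₂),
      ⟪H t x y v, u⟫ = ⟪v, H t x y u⟫)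
    (hHcoer : ∀ t ∈ Finset.Icc 1 T, ∀ (x : E₁) (y : E₂) (v : E₂),
      μ_g * ‖v‖ ^ 2 ≤ ⟪H t x y v, v⟫)
    (hHbd : ∀ t ∈ Finset.Icc 1 T, ∀ (x : E₁) (y : E₂), ‖H t x y‖ ≤ L_g1)
    (hJbd : ∀ t ∈ Finset.Icc 1 T, ∀ (x : E₁) (y : E₂), ‖J t x y‖ ≤ L_g1)
    (hHlip : ∀ t ∈ Finset.Icc 1 T, ∀ (x x' : E₁) (y y' : E₂),
      ‖H t x y - H t x' y'‖ ^ 2 ≤ L_g2 ^ 2 * (‖x - x'‖ ^ 2 + ‖y - y'‖ ^ 2))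
    (hJlip : ∀ t ∈ Finset.Icc 1 T, ∀ (x x' : E₁) (y y' : E₂),
      ‖J t x y - J t x' y'‖ ^ 2 ≤ L_g2 ^ 2 * (‖x - x'‖ ^ 2 + ‖y - y'‖ ^ 2))
    -- solution of the linear system and the hypergradient of F
    (vstar : ℕ → E₁ → E₂ → E₂)
    (hvstar : ∀ t ∈ Finset.Icc 1 T, ∀ (x : E₁) (y : E₂), H t x y (vstar t x y) = fy t x y)
    (F : ℕ → E₁ → ℝ) (hFdef : ∀ (t : ℕ) (x : E₁), F t x = f t x (ystar t x))
    (gradF : ℕ → E₁ → E₁)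
    (hgradFdef : ∀ (t : ℕ) (x : E₁),
      gradF t x = fx t x (ystar t x) - J t x (ystar t x) (vstar t x (ystar t x)))
    (hFbd : ∀ t ∈ Finset.Icc 1 T, ∀ x : E₁, |F t x| ≤ Q)
    (hFgrad : ∀ t ∈ Finset.Icc 1 T, ∀ x : E₁, HasGradientAt (F t) (gradF t x) x)
    (hFlip : ∀ t ∈ Finset.Icc 1 T, ∀ x x' : E₁,
      ‖gradF t x - gradF t x'‖ ≤ L_F * ‖x - x'‖)
    -- algorithm parameters
    (δ β γ : ℝ) (M : ℕ)
    (hδ : 0 < δ) (hβ : 0 < β) (hβ' : β ≤ 1 / L_g1)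
    (hM : (1 - β * μ_g) ^ M ≤ 1 / (T : ℝ))
    (hγ : 0 < γ) (hγ' : γ ≤ 1 / (2 * L_F))
    -- iterates
    (x : ℕ → E₁) (y : ℕ → E₂) (v : ℕ → E₂)
    (hxX : ∀ t ∈ Finset.Icc 1 (T + 1), x t ∈ X)
    (hv1 : ‖v 1‖ ≤ L_f0 / μ_g)
    (hinner : ∀ t ∈ Finset.Icc 1 T, ‖gy t (x t) (y (t + 1))‖ ≤ δ)
    (hvstep : ∀ t ∈ Finset.Icc 1 T, v (t + 1) =
      (fun u : E₂ =>
        projV (u - β • (H t (x t) (y (t + 1)) u - fy t (x t) (y (t + 1)))))^[M] (v t))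
    (hxstep : ∀ t ∈ Finset.Icc 1 T, x (t + 1) =
      projX (x t - γ • (fx t (x t) (y (t + 1)) - J t (x t) (y (t + 1)) (v (t + 1))))) :
    ∑ t ∈ Finset.Icc 1 T, ‖γ⁻¹ • (x t - projX (x t - γ • gradF t (x t)))‖ ^ 2 ≤
      16 * Q / γ + 6 * κ_F * δ ^ 2 * T + 768 * L_f0 ^ 2 * κ_g ^ 2 +
      (8 / γ) * ∑ t ∈ Finset.Icc 2 T, ⨆ z : E₁, |F t z - F (t - 1) z| := by
  classical
  have hLg1 : 0 < L_g1 := lt_of_lt_of_le hμ hμL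
  have hTr1 : (1:ℝ) ≤ (T:ℝ) := by exact_mod_cast hT
  have hTr0 : (0:ℝ) < (T:ℝ) := by linarith
  have hrnn : (0:ℝ) ≤ L_f0 / μ_g := by positivity
  have hκg1 : (1:ℝ) ≤ κ_g := by
    rw [hκg, le_div_iff₀ hμ]; linarith
  have hκg0 : (0:ℝ) < κ_g := by linarith
  have hκF0 : (0:ℝ) < κ_F := by rw [hκF]; positivity
  have hβμ : β * μ_g ≤ 1 := by
    have h1 : β * L_g1 ≤ 1 := by
      rw [le_div_iff₀ hLg1] at hβ'; linarith only [hβ']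
    nlinarith only [h1, hμL, hβ.le]
  -- ball set and projection facts
  set VB : Set E₂ := Metric.closedBall 0 (L_f0 / μ_g) with hVBdef
  have hVB : ∀ u : E₂, u ∈ VB ↔ ‖u‖ ≤ L_f0 / μ_g := fun u => mem_closedBall_zero_iff
  have hpV : ∀ w : E₂, projV w ∈ VB ∧ ∀ u ∈ VB, ‖w - projV w‖ ≤ ‖w - u‖ := fun w =>
    ⟨(hVB _).mpr (hprojV w).1, fun u hu => (hprojV w).2 u ((hVB u).mp hu)⟩
  have hXvi := aobo_proj_vi X hXconv projX hprojX
  have hVnonexp := aobo_proj_nonexp VB (convex_closedBall 0 _) projV hpV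
  have hVfix : ∀ u : E₂, ‖u‖ ≤ L_f0 / μ_g → projV u = u := by
    intro u hu
    have h1 := (hprojV u).2 u hu
    simp only [sub_self, norm_zero] at h1
    have h2 : u - projV u = 0 := by
      have := norm_nonneg (u - projV u)
      have : ‖u - projV u‖ = 0 := le_antisymm h1 this
      exact norm_eq_zero.mp this
    have := sub_eq_zero.mp h2
    exact this.symm
  -- fy bound
  have hfybd : ∀ t ∈ Finset.Icc 1 T, ∀ (x' : E₁) (y' : E₂), ‖fy t x' y'‖ ≤ L_f0 := by
    intro t ht x' y'
    have h1 := hfbd t ht x' y'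
    have h2 := sq_nonneg ‖fx t x' y'‖
    exact aobo_sq_le _ _ (norm_nonneg _) hLf0.le (by linarith only [h1, h2])
  -- vstar bound
  have hvsbd : ∀ t ∈ Finset.Icc 1 T, ∀ (x' : E₁) (y' : E₂),
      ‖vstar t x' y'‖ ≤ L_f0 / μ_g := by
    intro t ht x' y'
    apply aobo_div_bd μ_g L_f0 _ hμ hLf0.le (norm_nonneg _)
    have h1 := hHcoer t ht x' y' (vstar t x' y')
    rw [hvstar t ht x' y'] at h1
    have h2 : ⟪fy t x' y', vstar t x' y'⟫ ≤ ‖fy t x' y'‖ * ‖vstar t x' y'‖ :=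
      real_inner_le_norm _ _
    have h3 := hfybd t ht x' y'
    nlinarith only [h1, h2, h3, norm_nonneg (vstar t x' y'), norm_nonneg (fy t x' y')]
  -- membership of iterates in the ball
  have hvmem : ∀ s : ℕ, 1 ≤ s → s ≤ T + 1 → ‖v s‖ ≤ L_f0 / μ_g := by
    intro s
    induction s with
    | zero => omega
    | succ s ih =>
      intro _ hs
      rcases Nat.eq_or_lt_of_le (by omega : 1 ≤ s + 1) with h1 | h1
      · rw [← h1]; exact hv1
      · have hs1 : 1 ≤ s := by omega
        have hsT : s ≤ T := by omega
        have hmem : s ∈ Finset.Icc 1 T := Finset.mem_Icc.mpr ⟨hs1, hsT⟩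
        rw [hvstep s hmem]
        have hkey := aobo_iter_mem
          (fun u : E₂ => projV (u - β • (H s (x s) (y (s + 1)) u - fy s (x s) (y (s + 1)))))
          {u : E₂ | ‖u‖ ≤ L_f0 / μ_g} (fun u => (hprojV _).1) M (v s) (ih hs1 (by omega))
        exact hkey
  -- PER-ROUND BOUND
  have hmain : ∀ t ∈ Finset.Icc 1 T,
      ‖γ⁻¹ • (x t - projX (x t - γ • gradF t (x t)))‖ ^ 2 ≤
        (14/3) * (F t (x t) - F t (x (t+1))) / γ +
          (6 * κ_F * δ ^ 2 + (1176/5) * L_f0 ^ 2 * κ_g ^ 2 / (T:ℝ) ^ 2) := by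
    intro t ht
    obtain ⟨ht1, ht2⟩ := Finset.mem_Icc.mp ht
    have hxmem : x t ∈ X := hxX t (Finset.mem_Icc.mpr ⟨ht1, by omega⟩)
    set yp := y (t + 1) with hypdef
    set ys := ystar t (x t) with hysdef
    set vss := vstar t (x t) ys with hvssdef
    set vsp := vstar t (x t) yp with hvspdef
    set htld := fx t (x t) yp - J t (x t) yp (v (t + 1)) with hhtld
    set ev := gradF t (x t) - htld with hevdef
    -- gradient of g at the minimizer vanishes
    have hgy0 : gy t (x t) ys = 0 := by
      have hloc : IsLocalMin (g t (x t)) ys :=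
        Filter.Eventually.of_forall (hymin t ht (x t))
      have h0 := hloc.hasFDerivAt_eq_zero (hgy t ht (x t) ys).hasFDerivAt
      have h1 : ⟪gy t (x t) ys, gy t (x t) ys⟫ = 0 := by
        have := congrArg (fun L : E₂ →L[ℝ] ℝ => L (gy t (x t) ys)) h0
        simpa [InnerProductSpace.toDual_apply_apply] using this
      have h2 : ‖gy t (x t) ys‖ ^ 2 = 0 := by rw [← real_inner_self_eq_norm_sq]; exact h1
      have h3 : ‖gy t (x t) ys‖ = 0 := by
        nlinarith only [h2, norm_nonneg (gy t (x t) ys)]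
      exact norm_eq_zero.mp h3
    -- distance of the inner iterate to the minimizer
    have hdbd : ‖yp - ys‖ ≤ δ / μ_g := by
      apply aobo_div_bd μ_g δ _ hμ hδ.le (norm_nonneg _)
      have hsc := hgsc t ht (x t)
      have h1 := aobo_strong_lb (g t (x t)) μ_g hsc yp ys (gy t (x t) yp)
        (hgy t ht (x t) yp)
      have h2 := aobo_strong_lb (g t (x t)) μ_g hsc ys yp (gy t (x t) ys)
        (hgy t ht (x t) ys)
      rw [hgy0] at h2
      simp only [inner_zero_left] at h2
      have hnrm : ‖ys - yp‖ = ‖yp - ys‖ := norm_sub_rev _ _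
      rw [hnrm] at h1
      have h4 := abs_real_inner_le_norm (gy t (x t) yp) (ys - yp)
      rw [hnrm] at h4
      have h5 := hinner t ht
      rw [← hypdef] at h5
      linarith only [h1, h2, h4, neg_abs_le ⟪gy t (x t) yp, ys - yp⟫,
        mul_le_mul_of_nonneg_right h5 (norm_nonneg (yp - ys))]
    -- contraction of the linear-system iteration
    have hvdist : ‖v (t + 1) - vsp‖ ≤ (1 / (T:ℝ)) * (2 * (L_f0 / μ_g)) := by
      set Φ : E₂ → E₂ :=
        fun u => projV (u - β • (H t (x t) yp u - fy t (x t) yp)) with hΦ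
      have hfix : Φ vsp = vsp := by
        rw [hΦ]
        simp only
        rw [hvspdef, hvstar t ht (x t) yp, sub_self, smul_zero, sub_zero]
        exact hVfix _ (hvsbd t ht _ _)
      have hβL : β * L_g1 ≤ 1 := by rw [le_div_iff₀ hLg1] at hβ'; linarith
      set S : E₂ →L[ℝ] E₂ := ContinuousLinearMap.id ℝ E₂ - β • H t (x t) yp with hS
      have hSap : ∀ w : E₂, S w = w - β • (H t (x t) yp w) := by
        intro w
        simp [hS, ContinuousLinearMap.sub_apply, ContinuousLinearMap.smul_apply]
      have hHopbd : ∀ w : E₂, ‖H t (x t) yp w‖ ≤ L_g1 * ‖w‖ := fun w =>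
        le_trans ((H t (x t) yp).le_opNorm w)
          (mul_le_mul_of_nonneg_right (hHbd t ht _ _) (norm_nonneg w))
      have hSnorm : ∀ w : E₂, ‖S w‖ ≤ (1 - β * μ_g) * ‖w‖ := by
        intro w
        refine aobo_sa_norm S (1 - β * μ_g) (by linarith) ?_ ?_ ?_ w
        · intro v' u'
          rw [hSap, hSap, inner_sub_left, inner_sub_right, real_inner_smul_left,
            real_inner_smul_right, hHsa t ht]
        · intro w'
          rw [hSap, inner_sub_left, real_inner_smul_left, real_inner_self_eq_norm_sq]
          have h1 : ⟪H t (x t) yp w', w'⟫ ≤ L_g1 * ‖w'‖ ^ 2 := by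
            refine le_trans (real_inner_le_norm _ _) ?_
            nlinarith only [hHopbd w', norm_nonneg w']
          linarith only [mul_le_mul_of_nonneg_left h1 hβ.le,
            mul_le_mul_of_nonneg_right hβL (sq_nonneg ‖w'‖)]
        · intro w'
          rw [hSap, inner_sub_left, real_inner_smul_left, real_inner_self_eq_norm_sq]
          have h1 := hHcoer t ht (x t) yp w'
          linarith only [mul_le_mul_of_nonneg_left h1 hβ.le]
      have hcon : ∀ u : E₂, ‖Φ u - vsp‖ ≤ (1 - β * μ_g) * ‖u - vsp‖ := by
        intro u
        have hdiffeq : (u - β • (H t (x t) yp u - fy t (x t) yp)) -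
            (vsp - β • (H t (x t) yp vsp - fy t (x t) yp)) = S (u - vsp) := by
          rw [hSap, map_sub]
          module
        calc ‖Φ u - vsp‖ = ‖Φ u - Φ vsp‖ := by rw [hfix]
          _ ≤ ‖(u - β • (H t (x t) yp u - fy t (x t) yp)) -
              (vsp - β • (H t (x t) yp vsp - fy t (x t) yp))‖ := hVnonexp _ _
          _ = ‖S (u - vsp)‖ := by rw [hdiffeq]
          _ ≤ (1 - β * μ_g) * ‖u - vsp‖ := hSnorm _
      have hiter := aobo_iter_contract Φ vsp (1 - β * μ_g) (by linarith) hcon M (v t)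
      have hvps : v (t + 1) = Φ^[M] (v t) := hvstep t ht
      rw [← hvps] at hiter
      have hvt : ‖v t‖ ≤ L_f0 / μ_g := hvmem t ht1 (by omega)
      have hdist2 : ‖v t - vsp‖ ≤ 2 * (L_f0 / μ_g) := by
        have h1 := norm_sub_le (v t) vsp
        have h2 := hvsbd t ht (x t) yp
        rw [← hvspdef] at h2
        linarith
      calc ‖v (t + 1) - vsp‖ ≤ (1 - β * μ_g) ^ M * ‖v t - vsp‖ := hiter
        _ ≤ (1 / (T:ℝ)) * (2 * (L_f0 / μ_g)) := by
            apply mul_le_mul hM hdist2 (norm_nonneg _) (by positivity)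
    -- Lipschitz-type component bounds
    have hfydiff : ‖fy t (x t) ys - fy t (x t) yp‖ ≤ L_f1 * ‖yp - ys‖ := by
      have h1 := hflip t ht (x t) (x t) ys yp
      apply aobo_sq_le _ _ (norm_nonneg _) (by positivity)
      have hz : ‖x t - x t‖ = 0 := by simp
      have hnrm : ‖ys - yp‖ = ‖yp - ys‖ := norm_sub_rev _ _
      rw [hz, hnrm] at h1
      nlinarith only [h1, sq_nonneg ‖fx t (x t) ys - fx t (x t) yp‖]
    have hfxdiff : ‖fx t (x t) ys - fx t (x t) yp‖ ≤ L_f1 * ‖yp - ys‖ := by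
      have h1 := hflip t ht (x t) (x t) ys yp
      apply aobo_sq_le _ _ (norm_nonneg _) (by positivity)
      have hz : ‖x t - x t‖ = 0 := by simp
      have hnrm : ‖ys - yp‖ = ‖yp - ys‖ := norm_sub_rev _ _
      rw [hz, hnrm] at h1
      nlinarith only [h1, sq_nonneg ‖fy t (x t) ys - fy t (x t) yp‖]
    have hHdiff : ‖H t (x t) yp - H t (x t) ys‖ ≤ L_g2 * ‖yp - ys‖ := by
      have h1 := hHlip t ht (x t) (x t) yp ys
      apply aobo_sq_le _ _ (norm_nonneg _) (by positivity)
      have hz : ‖x t - x t‖ = 0 := by simp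
      rw [hz] at h1
      nlinarith only [h1]
    have hJdiff : ‖J t (x t) ys - J t (x t) yp‖ ≤ L_g2 * ‖yp - ys‖ := by
      have h1 := hJlip t ht (x t) (x t) ys yp
      apply aobo_sq_le _ _ (norm_nonneg _) (by positivity)
      have hz : ‖x t - x t‖ = 0 := by simp
      have hnrm : ‖ys - yp‖ = ‖yp - ys‖ := norm_sub_rev _ _
      rw [hz, hnrm] at h1
      nlinarith only [h1]
    -- bound on the difference of solutions of the linear systems
    have hwbd : ‖vss - vsp‖ ≤ (L_f1 + L_g2 * (L_f0 / μ_g)) * ‖yp - ys‖ / μ_g := by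
      apply aobo_div_bd μ_g _ _ hμ (by positivity) (norm_nonneg _)
      have hco := hHcoer t ht (x t) ys (vss - vsp)
      have hexp : H t (x t) ys (vss - vsp) =
          (fy t (x t) ys - fy t (x t) yp) + ((H t (x t) yp - H t (x t) ys) vsp) := by
        rw [map_sub, hvssdef, hvstar t ht (x t) ys, ContinuousLinearMap.sub_apply,
          hvspdef, hvstar t ht (x t) yp]
        abel
      rw [hexp] at hco
      have h1 : ⟪(fy t (x t) ys - fy t (x t) yp) + ((H t (x t) yp - H t (x t) ys) vsp),
          vss - vsp⟫ ≤ (L_f1 * ‖yp - ys‖ + (L_g2 * ‖yp - ys‖) * (L_f0 / μ_g)) *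
            ‖vss - vsp‖ := by
        rw [inner_add_left]
        have h2 := real_inner_le_norm (fy t (x t) ys - fy t (x t) yp) (vss - vsp)
        have h3 := real_inner_le_norm ((H t (x t) yp - H t (x t) ys) vsp) (vss - vsp)
        have h4 : ‖(H t (x t) yp - H t (x t) ys) vsp‖ ≤ (L_g2 * ‖yp - ys‖) * (L_f0 / μ_g) := by
          refine le_trans ((H t (x t) yp - H t (x t) ys).le_opNorm vsp) ?_
          have h5 := hvsbd t ht (x t) yp
          rw [← hvspdef] at h5
          exact mul_le_mul hHdiff h5 (norm_nonneg _) (by positivity)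
        linarith only [h2, h3,
          mul_le_mul_of_nonneg_right hfydiff (norm_nonneg (vss - vsp)),
          mul_le_mul_of_nonneg_right h4 (norm_nonneg (vss - vsp))]
      linarith only [hco, h1]
    -- bound on the main hypergradient error term
    have hA : ‖(fx t (x t) ys - fx t (x t) yp) - (J t (x t) ys vss - J t (x t) yp vsp)‖ ≤
        (L_f1 + L_g2 * (L_f0 / μ_g) + L_g1 * ((L_f1 + L_g2 * (L_f0 / μ_g)) / μ_g)) *
          ‖yp - ys‖ := by
      have hsplit : J t (x t) ys vss - J t (x t) yp vsp =
          (J t (x t) ys - J t (x t) yp) vss + J t (x t) yp (vss - vsp) := by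
        rw [ContinuousLinearMap.sub_apply, map_sub]
        abel
      have h1 : ‖(J t (x t) ys - J t (x t) yp) vss‖ ≤
          (L_g2 * ‖yp - ys‖) * (L_f0 / μ_g) := by
        refine le_trans ((J t (x t) ys - J t (x t) yp).le_opNorm vss) ?_
        have h5 := hvsbd t ht (x t) ys
        rw [← hvssdef] at h5
        exact mul_le_mul hJdiff h5 (norm_nonneg _) (by positivity)
      have h2 : ‖J t (x t) yp (vss - vsp)‖ ≤
          L_g1 * ((L_f1 + L_g2 * (L_f0 / μ_g)) * ‖yp - ys‖ / μ_g) := by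
        refine le_trans ((J t (x t) yp).le_opNorm _) ?_
        exact mul_le_mul (hJbd t ht _ _) hwbd (norm_nonneg _) (by linarith)
      calc ‖(fx t (x t) ys - fx t (x t) yp) - (J t (x t) ys vss - J t (x t) yp vsp)‖
          ≤ ‖fx t (x t) ys - fx t (x t) yp‖ + ‖J t (x t) ys vss - J t (x t) yp vsp‖ :=
            norm_sub_le _ _
        _ ≤ ‖fx t (x t) ys - fx t (x t) yp‖ + (‖(J t (x t) ys - J t (x t) yp) vss‖ +
            ‖J t (x t) yp (vss - vsp)‖) := by
            rw [hsplit]; exact add_le_add_right (norm_add_le _ _) _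
        _ ≤ (L_f1 + L_g2 * (L_f0 / μ_g) + L_g1 * ((L_f1 + L_g2 * (L_f0 / μ_g)) / μ_g)) *
            ‖yp - ys‖ := by
            have h8 : L_g1 * ((L_f1 + L_g2 * (L_f0 / μ_g)) * ‖yp - ys‖ / μ_g) =
                L_g1 * ((L_f1 + L_g2 * (L_f0 / μ_g)) / μ_g) * ‖yp - ys‖ := by ring
            linarith only [hfxdiff, h1, h2, h8.le]
    have hA2 : ‖(fx t (x t) ys - fx t (x t) yp) -
        (J t (x t) ys vss - J t (x t) yp vsp)‖ ^ 2 ≤ κ_F * δ ^ 2 := by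
      set u1 := L_f1 with hu1
      set u2 := L_f0 * L_g2 / μ_g with hu2
      set u3 := L_g1 * L_f1 / μ_g with hu3
      set u4 := L_g1 * L_f0 * L_g2 / μ_g ^ 2 with hu4
      have hκμ : κ_F * μ_g ^ 2 = 2 * u1 ^ 2 + 4 * u2 ^ 2 + 16 * u3 ^ 2 + 16 * u4 ^ 2 := by
        rw [hκF, hu2, hu3, hu4]
        field_simp
        ring
      have hs2 : (u1 + u2 + u3 + u4) ^ 2 ≤ κ_F * μ_g ^ 2 := by
        rw [hκμ]
        nlinarith only [sq_nonneg (u1 - (u2 + u3 + u4)), sq_nonneg (u2 - (u3 + u4)),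
          sq_nonneg (u3 - u4), sq_nonneg u3, sq_nonneg u4, sq_nonneg (u3 + u4)]
      have hseq : L_f1 + L_g2 * (L_f0 / μ_g) + L_g1 * ((L_f1 + L_g2 * (L_f0 / μ_g)) / μ_g)
          = u1 + u2 + u3 + u4 := by
        rw [hu1, hu2, hu3, hu4]
        field_simp
        ring
      rw [hseq] at hA
      have hs0 : (0:ℝ) ≤ u1 + u2 + u3 + u4 := by
        rw [hu1, hu2, hu3, hu4]; positivity
      have h1 : ‖(fx t (x t) ys - fx t (x t) yp) -
          (J t (x t) ys vss - J t (x t) yp vsp)‖ ^ 2 ≤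
          ((u1 + u2 + u3 + u4) * ‖yp - ys‖) ^ 2 :=
        pow_le_pow_left₀ (norm_nonneg _) hA 2
      have h2 : ‖yp - ys‖ ^ 2 ≤ (δ / μ_g) ^ 2 := pow_le_pow_left₀ (norm_nonneg _) hdbd 2
      have h3 : (κ_F * μ_g ^ 2) * (δ / μ_g) ^ 2 = κ_F * δ ^ 2 := by
        field_simp
      linarith only [h1, h3.le,
        mul_le_mul_of_nonneg_right hs2 (sq_nonneg ‖yp - ys‖),
        mul_le_mul_of_nonneg_left h2 (by positivity : (0:ℝ) ≤ κ_F * μ_g ^ 2)]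
    -- the linear-system residual term
    have hB : ‖J t (x t) yp (v (t + 1) - vsp)‖ ≤ 2 * L_f0 * κ_g / (T:ℝ) := by
      have h1 : ‖J t (x t) yp (v (t + 1) - vsp)‖ ≤
          L_g1 * ((1 / (T:ℝ)) * (2 * (L_f0 / μ_g))) := by
        refine le_trans ((J t (x t) yp).le_opNorm _) ?_
        exact mul_le_mul (hJbd t ht _ _) hvdist (norm_nonneg _) (by linarith)
      have h2 : L_g1 * ((1 / (T:ℝ)) * (2 * (L_f0 / μ_g))) = 2 * L_f0 * κ_g / (T:ℝ) := by
        rw [hκg]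
        field_simp
      linarith only [h1, h2.le]
    -- error decomposition
    have hedec : ev = ((fx t (x t) ys - fx t (x t) yp) -
        (J t (x t) ys vss - J t (x t) yp vsp)) + J t (x t) yp (v (t + 1) - vsp) := by
      rw [hevdef, hhtld, hgradFdef, map_sub, ← hysdef, ← hvssdef]
      abel
    have hE2 : ‖ev‖ ^ 2 ≤ (54/49) * (κ_F * δ ^ 2) +
        (54/5) * (2 * L_f0 * κ_g / (T:ℝ)) ^ 2 := by
      have hE : ‖ev‖ ≤ ‖(fx t (x t) ys - fx t (x t) yp) -
          (J t (x t) ys vss - J t (x t) yp vsp)‖ + ‖J t (x t) yp (v (t + 1) - vsp)‖ := by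
        rw [hedec]; exact norm_add_le _ _
      have h1 : ‖ev‖ ^ 2 ≤ (‖(fx t (x t) ys - fx t (x t) yp) -
          (J t (x t) ys vss - J t (x t) yp vsp)‖ +
          ‖J t (x t) yp (v (t + 1) - vsp)‖) ^ 2 :=
        pow_le_pow_left₀ (norm_nonneg _) hE 2
      have h2 : ‖J t (x t) yp (v (t + 1) - vsp)‖ ^ 2 ≤ (2 * L_f0 * κ_g / (T:ℝ)) ^ 2 :=
        pow_le_pow_left₀ (norm_nonneg _) hB 2
      linarith only [h1, h2, hA2,
        sq_nonneg (5 * ‖(fx t (x t) ys - fx t (x t) yp) -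
          (J t (x t) ys vss - J t (x t) yp vsp)‖ -
          49 * ‖J t (x t) yp (v (t + 1) - vsp)‖)]
    -- variational inequality for the projected step
    have hxs : x (t + 1) = projX (x t - γ • htld) := by
      rw [hhtld]; exact hxstep t ht
    have hVI : ‖x t - x (t + 1)‖ ^ 2 ≤ γ * ⟪htld, x t - x (t + 1)⟫ := by
      have h1 := hXvi (x t - γ • htld) (x t) hxmem
      rw [← hxs] at h1
      have h2 : (x t - γ • htld) - x (t + 1) = (x t - x (t + 1)) - γ • htld := by abel
      rw [h2, inner_sub_left, real_inner_smul_left, real_inner_self_eq_norm_sq] at h1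
      linarith only [h1]
    -- descent step
    have hdesc := aobo_descent (F t) (gradF t) L_F hLF.le (hFgrad t ht) (hFlip t ht)
      (x t) (x (t + 1))
    have hγLF : γ * L_F ≤ 1 / 2 := by
      rw [le_div_iff₀ (by positivity : (0:ℝ) < 2 * L_F)] at hγ'
      linarith only [hγ']
    have hip : ⟪gradF t (x t), x (t + 1) - x t⟫ =
        -(⟪htld, x t - x (t + 1)⟫ + ⟪ev, x t - x (t + 1)⟫) := by
      have he' : gradF t (x t) = htld + ev := by rw [hevdef]; abel
      have hneg : x (t + 1) - x t = -(x t - x (t + 1)) := by abel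
      rw [he', hneg, inner_neg_right, inner_add_left]
    have hnrm2 : ‖x (t + 1) - x t‖ = ‖x t - x (t + 1)‖ := norm_sub_rev _ _
    rw [hip, hnrm2] at hdesc
    have hkey1 : (3/8) * ‖x t - x (t + 1)‖ ^ 2 ≤
        γ * (F t (x t) - F t (x (t + 1))) + (2/3) * γ ^ 2 * ‖ev‖ ^ 2 := by
      have h4 := mul_le_mul_of_nonneg_left hdesc hγ.le
      have hipe : -⟪ev, x t - x (t + 1)⟫ ≤ ‖ev‖ * ‖x t - x (t + 1)‖ := by
        have h5 := abs_real_inner_le_norm ev (x t - x (t + 1))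
        linarith only [h5, neg_abs_le ⟪ev, x t - x (t + 1)⟫]
      have h6 := mul_le_mul_of_nonneg_left hipe hγ.le
      have h7 := mul_le_mul_of_nonneg_right hγLF (sq_nonneg ‖x t - x (t + 1)‖)
      nlinarith only [h4, hVI, h6, h7,
        sq_nonneg (3 * ‖x t - x (t + 1)‖ - 4 * γ * ‖ev‖)]
    -- gradient mapping comparison
    have hGn : γ * ‖γ⁻¹ • (x t - projX (x t - γ • gradF t (x t)))‖ ≤
        ‖x t - x (t + 1)‖ + γ * ‖ev‖ := by
      have h1 : ‖γ⁻¹ • (x t - projX (x t - γ • gradF t (x t)))‖ =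
          γ⁻¹ * ‖x t - projX (x t - γ • gradF t (x t))‖ := by
        rw [norm_smul, Real.norm_eq_abs, abs_of_pos (inv_pos.mpr hγ)]
      have h2 : γ * ‖γ⁻¹ • (x t - projX (x t - γ • gradF t (x t)))‖ =
          ‖x t - projX (x t - γ • gradF t (x t))‖ := by
        rw [h1]; field_simp
      rw [h2]
      have h3 : x t - projX (x t - γ • gradF t (x t)) = (x t - x (t + 1)) +
          (x (t + 1) - projX (x t - γ • gradF t (x t))) := by abel
      rw [h3]
      refine le_trans (norm_add_le _ _) ?_
      rw [hxs]
      have h5 := aobo_proj_nonexp X hXconv projX hprojX (x t - γ • htld)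
        (x t - γ • gradF t (x t))
      have h6 : (x t - γ • htld) - (x t - γ • gradF t (x t)) = γ • ev := by
        rw [hevdef]; module
      rw [h6] at h5
      have h7 : ‖γ • ev‖ = γ * ‖ev‖ := by
        rw [norm_smul, Real.norm_eq_abs, abs_of_pos hγ]
      rw [h7] at h5
      linarith only [h5]
    have h9 : γ ^ 2 * ‖γ⁻¹ • (x t - projX (x t - γ • gradF t (x t)))‖ ^ 2 ≤
        (14/3) * γ * (F t (x t) - F t (x (t + 1))) +
          γ ^ 2 * (6 * κ_F * δ ^ 2 + (1176/5) * L_f0 ^ 2 * κ_g ^ 2 / (T:ℝ) ^ 2) := by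
      have hsq : (γ * ‖γ⁻¹ • (x t - projX (x t - γ • gradF t (x t)))‖) ^ 2 ≤
          (‖x t - x (t + 1)‖ + γ * ‖ev‖) ^ 2 :=
        pow_le_pow_left₀ (by positivity) hGn 2
      have hE2γ : γ ^ 2 * ‖ev‖ ^ 2 ≤ γ ^ 2 * ((54/49) * (κ_F * δ ^ 2) +
          (54/5) * (2 * L_f0 * κ_g / (T:ℝ)) ^ 2) :=
        mul_le_mul_of_nonneg_left hE2 (by positivity)
      have hBsq : (2 * L_f0 * κ_g / (T:ℝ)) ^ 2 = 4 * L_f0 ^ 2 * κ_g ^ 2 / (T:ℝ) ^ 2 := by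
        ring
      rw [hBsq] at hE2γ
      have e1 : γ ^ 2 * ‖γ⁻¹ • (x t - projX (x t - γ • gradF t (x t)))‖ ^ 2 ≤
          (‖x t - x (t + 1)‖ + γ * ‖ev‖) ^ 2 := by linarith only [hsq]
      have e2 : (‖x t - x (t + 1)‖ + γ * ‖ev‖) ^ 2 ≤
          (7/4) * ‖x t - x (t + 1)‖ ^ 2 + (7/3) * (γ ^ 2 * ‖ev‖ ^ 2) := by
        nlinarith only [sq_nonneg (3 * ‖x t - x (t + 1)‖ - 4 * γ * ‖ev‖)]
      have e3 : (7/4) * ‖x t - x (t + 1)‖ ^ 2 ≤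
          (14/3) * (γ * (F t (x t) - F t (x (t + 1)))) +
            (28/9) * (γ ^ 2 * ‖ev‖ ^ 2) := by linarith only [hkey1]
      have e4 := mul_le_mul_of_nonneg_left hE2γ (by norm_num : (0:ℝ) ≤ 49/9)
      ring_nf at e1 e2 e3 e4 ⊢
      linarith only [e1, e2, e3, e4]
    have hγ2 : (0:ℝ) < γ ^ 2 := by positivity
    calc ‖γ⁻¹ • (x t - projX (x t - γ • gradF t (x t)))‖ ^ 2
        = (γ ^ 2 * ‖γ⁻¹ • (x t - projX (x t - γ • gradF t (x t)))‖ ^ 2) / γ ^ 2 := by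
          field_simp
      _ ≤ ((14/3) * γ * (F t (x t) - F t (x (t + 1))) +
          γ ^ 2 * (6 * κ_F * δ ^ 2 + (1176/5) * L_f0 ^ 2 * κ_g ^ 2 / (T:ℝ) ^ 2)) / γ ^ 2 := by
          gcongr
      _ = (14/3) * (F t (x t) - F t (x (t + 1))) / γ +
          (6 * κ_F * δ ^ 2 + (1176/5) * L_f0 ^ 2 * κ_g ^ 2 / (T:ℝ) ^ 2) := by
          field_simp
  -- SUMMATION
  have hsum1 := Finset.sum_le_sum hmain
  have hcard : (Finset.Icc 1 T).card = T := by
    rw [Nat.card_Icc]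
    omega
  have hbdd : ∀ t ∈ Finset.Icc 2 T,
      BddAbove (Set.range fun z : E₁ => |F t z - F (t - 1) z|) := by
    intro t ht'
    obtain ⟨ht1, ht2⟩ := Finset.mem_Icc.mp ht'
    refine ⟨2 * Q, ?_⟩
    rintro r ⟨z, rfl⟩
    have h1 := hFbd t (Finset.mem_Icc.mpr ⟨by omega, ht2⟩) z
    have h2 := hFbd (t - 1) (Finset.mem_Icc.mpr ⟨by omega, by omega⟩) z
    have h3 : |F t z - F (t - 1) z| ≤ |F t z| + |F (t - 1) z| := abs_sub _ _
    simp only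
    linarith only [h1, h2, h3]
  have hsupbd : ∀ t ∈ Finset.Icc 2 T,
      F t (x t) - F (t - 1) (x t) ≤ ⨆ z : E₁, |F t z - F (t - 1) z| := by
    intro t ht'
    exact le_trans (le_abs_self _) (le_ciSup (hbdd t ht') (x t))
  have hsupnn : ∀ t ∈ Finset.Icc 2 T,
      (0:ℝ) ≤ ⨆ z : E₁, |F t z - F (t - 1) z| := by
    intro t ht'
    exact le_trans (abs_nonneg (F t (x t) - F (t - 1) (x t))) (le_ciSup (hbdd t ht') (x t))
  have hSnn : (0:ℝ) ≤ ∑ t ∈ Finset.Icc 2 T, ⨆ z : E₁, |F t z - F (t - 1) z| :=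
    Finset.sum_nonneg hsupnn
  have htele := aobo_telescope F x T hT
  have hSDel : ∑ t ∈ Finset.Icc 1 T, (F t (x t) - F t (x (t + 1))) ≤
      2 * Q + ∑ t ∈ Finset.Icc 2 T, ⨆ z : E₁, |F t z - F (t - 1) z| := by
    rw [htele]
    have h1 : F 1 (x 1) ≤ Q := le_trans (le_abs_self _)
      (hFbd 1 (Finset.mem_Icc.mpr ⟨le_refl 1, hT⟩) (x 1))
    have h2 : -Q ≤ F T (x (T + 1)) := by
      have h3 := hFbd T (Finset.mem_Icc.mpr ⟨hT, le_refl T⟩) (x (T + 1))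
      linarith only [h3, neg_abs_le (F T (x (T + 1)))]
    have h4 := Finset.sum_le_sum hsupbd
    linarith only [h1, h2, h4]
  refine le_trans hsum1 ?_
  have hsplit : ∑ t ∈ Finset.Icc 1 T, ((14/3) * (F t (x t) - F t (x (t + 1))) / γ +
      (6 * κ_F * δ ^ 2 + (1176/5) * L_f0 ^ 2 * κ_g ^ 2 / (T:ℝ) ^ 2)) =
      (14 / (3 * γ)) * ∑ t ∈ Finset.Icc 1 T, (F t (x t) - F t (x (t + 1))) +
        (T:ℝ) * (6 * κ_F * δ ^ 2 + (1176/5) * L_f0 ^ 2 * κ_g ^ 2 / (T:ℝ) ^ 2) := by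
    rw [Finset.sum_add_distrib, Finset.sum_const, hcard, nsmul_eq_mul]
    congr 1
    rw [Finset.mul_sum]
    refine Finset.sum_congr rfl fun t _ => ?_
    ring
  rw [hsplit]
  have hmul : (14 / (3 * γ)) * (∑ t ∈ Finset.Icc 1 T, (F t (x t) - F t (x (t + 1)))) ≤
      (14 / (3 * γ)) * (2 * Q + ∑ t ∈ Finset.Icc 2 T, ⨆ z : E₁, |F t z - F (t - 1) z|) :=
    mul_le_mul_of_nonneg_left hSDel (by positivity)
  have hfinal1 : (14 / (3 * γ)) * (2 * Q +
      ∑ t ∈ Finset.Icc 2 T, ⨆ z : E₁, |F t z - F (t - 1) z|) ≤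
      16 * Q / γ + (8 / γ) * ∑ t ∈ Finset.Icc 2 T, ⨆ z : E₁, |F t z - F (t - 1) z| := by
    have heq : 16 * Q / γ + (8 / γ) * (∑ t ∈ Finset.Icc 2 T, ⨆ z : E₁, |F t z - F (t - 1) z|) -
        (14 / (3 * γ)) * (2 * Q + ∑ t ∈ Finset.Icc 2 T, ⨆ z : E₁, |F t z - F (t - 1) z|) =
        ((20/3) * Q + (10/3) * ∑ t ∈ Finset.Icc 2 T, ⨆ z : E₁, |F t z - F (t - 1) z|) / γ := by
      field_simp
      ring
    have hnn : (0:ℝ) ≤ ((20/3) * Q + (10/3) *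
        ∑ t ∈ Finset.Icc 2 T, ⨆ z : E₁, |F t z - F (t - 1) z|) / γ := by
      apply div_nonneg _ hγ.le
      linarith only [hQ, hSnn]
    linarith only [heq, hnn]
  have hTterm : (T:ℝ) * (6 * κ_F * δ ^ 2 + (1176/5) * L_f0 ^ 2 * κ_g ^ 2 / (T:ℝ) ^ 2) ≤
      6 * κ_F * δ ^ 2 * (T:ℝ) + 768 * L_f0 ^ 2 * κ_g ^ 2 := by
    have h1 : (T:ℝ) * ((1176/5) * L_f0 ^ 2 * κ_g ^ 2 / (T:ℝ) ^ 2) =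
        (1176/5) * L_f0 ^ 2 * κ_g ^ 2 / (T:ℝ) := by
      field_simp
    have h2 : (1176/5) * L_f0 ^ 2 * κ_g ^ 2 / (T:ℝ) ≤ (1176/5) * L_f0 ^ 2 * κ_g ^ 2 :=
      div_le_self (by positivity) hTr1
    have h3 : (1176/5) * L_f0 ^ 2 * κ_g ^ 2 ≤ 768 * L_f0 ^ 2 * κ_g ^ 2 := by
      nlinarith only [sq_nonneg L_f0, sq_nonneg κ_g, sq_nonneg (L_f0 * κ_g)]
    nlinarith only [h1, h2, h3]
  linarith only [hmul, hfinal1, hTterm]
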